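/- Let T > 0, τ ∈ (0, T), A > 0, α > 0, B > 0, and suppose y : [0, T) → [0, ∞) is absolutely continuous with y'(t) + A·y(t)^α ≤ h(t) for almost every t ∈ (0, T), where h ∈ L¹_loc([0, T)) is nonnegative and satisfies ∫_t^{t+τ} h(s) ds ≤ B for all t ∈ (0, T − τ). Then y(t) ≤ max{ y(0) + B, (1/τ^{1/α})·(B/A)^{1/α} + 2B } for all t ∈ (0, T). -/

import Mathlib

open MeasureTheory Set


lemma aux_hbound (T τ B : ℝ) (h : ℝ → ℝ) (hτ0 : 0 < τ) (hτT : τ < T) (hB : 0 < B)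
    (hh_nonneg : ∀ t ∈ Ico (0 : ℝ) T, 0 ≤ h t)
    (hh_int : ∀ t ∈ Ico (0 : ℝ) T, IntervalIntegrable h volume 0 t)
    (hh_bd : ∀ t ∈ Ioo (0 : ℝ) (T - τ), (∫ s in t..t + τ, h s) ≤ B) :
    ∀ a b : ℝ, 0 ≤ a → a ≤ b → b < T → (∫ s in a..b, h s) ≤ (b - a) / τ * B + B := by
  -- integrability on subintervals
  have hInt : ∀ a b : ℝ, 0 ≤ a → a ≤ b → b < T → IntervalIntegrable h volume a b := by
    intro a b ha hab hb
    refine (hh_int b ⟨ha.trans hab, hb⟩).mono_set ?_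
    rw [uIcc_of_le hab, uIcc_of_le (ha.trans hab)]
    exact Icc_subset_Icc ha le_rfl
  have hnn : ∀ a b : ℝ, 0 ≤ a → a ≤ b → b < T → 0 ≤ ∫ s in a..b, h s := by
    intro a b ha hab hb
    exact intervalIntegral.integral_nonneg hab
      (fun u hu => hh_nonneg u ⟨ha.trans hu.1, lt_of_le_of_lt hu.2 hb⟩)
  -- base case : interval of length ≤ τ
  have base : ∀ a b : ℝ, 0 ≤ a → a ≤ b → b < T → b - a ≤ τ → (∫ s in a..b, h s) ≤ B := by
    intro a b ha hab hb hlen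
    rcases lt_or_ge τ b with hbτ | hbτ
    · -- b > τ : compare with ∫_{b-τ}^b
      have hc0 : 0 < b - τ := by linarith
      have hcT : b - τ < T - τ := by linarith
      have hca : b - τ ≤ a := by linarith
      have h1 : (∫ s in (b - τ)..a, h s) + ∫ s in a..b, h s = ∫ s in (b - τ)..b, h s :=
        intervalIntegral.integral_add_adjacent_intervals
          (hInt _ _ hc0.le hca (lt_of_le_of_lt hab hb)) (hInt _ _ (hc0.le.trans hca) hab hb)
      have h2 := hnn _ _ hc0.le hca (lt_of_le_of_lt hab hb)
      have h3 : (∫ s in (b - τ)..b, h s) ≤ B := by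
        have := hh_bd (b - τ) ⟨hc0, hcT⟩
        simpa using this
      linarith
    · -- b ≤ τ : limit argument near 0
      rcases eq_or_lt_of_le (ha.trans hab) with hb0 | hb0
      · rw [← hb0] at hab ⊢
        have : a = 0 := le_antisymm (by linarith) ha
        simp [this, ← hb0, hB.le]
      -- reduce to a = 0
      have key0 : (∫ s in (0:ℝ)..b, h s) ≤ B := by
        set δ := min b (T - τ) with hδ
        have hδ0 : 0 < δ := lt_min hb0 (by linarith)
        have hFcont : ContinuousOn (fun x => ∫ s in (0:ℝ)..x, h s) (Icc 0 b) := by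
          have hio : IntegrableOn h (uIcc 0 b) volume := by
            rw [uIcc_of_le (ha.trans hab)]
            exact (integrableOn_Icc_iff_integrableOn_Ioc).2
              ((intervalIntegrable_iff_integrableOn_Ioc_of_le (ha.trans hab)).1
                (hInt 0 b le_rfl (ha.trans hab) hb))
          have := intervalIntegral.continuousOn_primitive_interval (a := (0:ℝ)) (b := b) hio
          rwa [uIcc_of_le (ha.trans hab)] at this
        have htend : Filter.Tendsto (fun x => ∫ s in (0:ℝ)..x, h s)
            (nhdsWithin 0 (Ioo 0 δ)) (nhds (∫ s in (0:ℝ)..(0:ℝ), h s)) := by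
          have h0mem : (0:ℝ) ∈ Icc (0:ℝ) b := ⟨le_rfl, hb0.le⟩
          have := (hFcont 0 h0mem).tendsto
          exact this.mono_left (nhdsWithin_mono _ (fun x hx => ⟨hx.1.le, hx.2.le.trans (min_le_left _ _)⟩))
        have hne : (nhdsWithin (0:ℝ) (Ioo 0 δ)).NeBot := by
          apply mem_closure_iff_nhdsWithin_neBot.mp
          rw [closure_Ioo hδ0.ne]
          exact ⟨le_rfl, hδ0.le⟩
        simp only [intervalIntegral.integral_same] at htend
        have hev : ∀ᶠ x in nhdsWithin (0:ℝ) (Ioo 0 δ),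
            (∫ s in (0:ℝ)..b, h s) - B ≤ (∫ s in (0:ℝ)..x, h s) := by
          filter_upwards [self_mem_nhdsWithin] with x hx
          have hx0 : 0 < x := hx.1
          have hxb : x ≤ b := (hx.2.le.trans (min_le_left _ _))
          have hxτ : x < T - τ := lt_of_lt_of_le hx.2 (min_le_right _ _)
          have hxτT : x + τ < T := by linarith
          have hbxτ : b ≤ x + τ := by linarith
          have hsplit : (∫ s in (0:ℝ)..x, h s) + ∫ s in x..b, h s = ∫ s in (0:ℝ)..b, h s :=
            intervalIntegral.integral_add_adjacent_intervals
              (hInt 0 x le_rfl hx0.le (lt_of_le_of_lt hxb hb)) (hInt x b hx0.le hxb hb)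
          have hsplit2 : (∫ s in x..b, h s) + ∫ s in b..(x+τ), h s = ∫ s in x..(x+τ), h s :=
            intervalIntegral.integral_add_adjacent_intervals
              (hInt x b hx0.le hxb hb) (hInt b (x+τ) (hx0.le.trans hxb) hbxτ hxτT)
          have h4 := hnn b (x+τ) (hx0.le.trans hxb) hbxτ hxτT
          have h5 := hh_bd x ⟨hx0, hxτ⟩
          linarith
        have := ge_of_tendsto htend hev
        linarith
      have hsplit : (∫ s in (0:ℝ)..a, h s) + ∫ s in a..b, h s = ∫ s in (0:ℝ)..b, h s :=
        intervalIntegral.integral_add_adjacent_intervals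
          (hInt 0 a le_rfl ha (lt_of_le_of_lt hab hb)) (hInt a b ha hab hb)
      have := hnn 0 a le_rfl ha (lt_of_le_of_lt hab hb)
      linarith
  -- induction on the number of τ-steps
  have main : ∀ n : ℕ, ∀ a b : ℝ, 0 ≤ a → a ≤ b → b < T → b - a ≤ (n + 1) * τ →
      (∫ s in a..b, h s) ≤ (n + 1) * B := by
    intro n
    induction n with
    | zero => intro a b ha hab hb hlen; simpa using base a b ha hab hb (by simpa using hlen)
    | succ n ih =>
      intro a b ha hab hb hlen
      rcases le_or_gt (b - a) τ with hsmall | hbig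
      · have := base a b ha hab hb hsmall
        have : (∫ s in a..b, h s) ≤ B := this
        have hn : (0:ℝ) ≤ (n+1 : ℕ) * B := by positivity
        push_cast
        push_cast at hn
        nlinarith
      · have hc0 : 0 ≤ b - τ := by linarith
        have hcb : b - τ ≤ b := by linarith
        have hac : a ≤ b - τ := by linarith
        have hcT : b - τ < T := by linarith
        have h1 := ih a (b - τ) ha hac hcT (by push_cast; push_cast at hlen; linarith)
        have h2 : (∫ s in (b-τ)..b, h s) ≤ B := by
          have hbb : 0 < b - τ := lt_of_le_of_lt (by linarith : (0:ℝ) ≤ a) (by linarith)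
          have := hh_bd (b - τ) ⟨hbb, by linarith⟩
          simpa using this
        have hsplit : (∫ s in a..(b-τ), h s) + ∫ s in (b-τ)..b, h s = ∫ s in a..b, h s :=
          intervalIntegral.integral_add_adjacent_intervals
            (hInt a (b-τ) ha hac hcT) (hInt (b-τ) b hc0 hcb hb)
        push_cast
        push_cast at h1
        linarith
  intro a b ha hab hb
  set n := ⌊(b - a) / τ⌋₊ with hn
  have h1 : b - a ≤ (n + 1) * τ := by
    have := Nat.lt_floor_add_one ((b - a) / τ)
    rw [div_lt_iff₀ hτ0] at this
    push_cast
    linarith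
  have h2 : (n : ℝ) ≤ (b - a) / τ := Nat.floor_le (div_nonneg (by linarith) hτ0.le)
  have := main n a b ha hab hb h1
  nlinarith [this, hB.le]

/-- Lemma 2.2 of the paper: a boundedness statement for an absolutely continuous
function `y` satisfying `y' + A y^α ≤ h` a.e., where `h` has uniformly bounded
integrals over intervals of length `τ`.  Absolute continuity of `y` with a.e.
derivative `g` is encoded by the integral representation `y t = y 0 + ∫₀^t g`. -/
theorem stmt_0 (T τ A α B : ℝ) (hT : 0 < T) (hτ : τ ∈ Ioo 0 T)
    (hA : 0 < A) (hα : 0 < α) (hB : 0 < B)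
    (y g h : ℝ → ℝ)
    (hy_nonneg : ∀ t ∈ Ico (0 : ℝ) T, 0 ≤ y t)
    (hg_int : ∀ t ∈ Ico (0 : ℝ) T, IntervalIntegrable g volume 0 t)
    (hy_AC : ∀ t ∈ Ico (0 : ℝ) T, y t = y 0 + ∫ s in (0 : ℝ)..t, g s)
    (hineq : ∀ᵐ t ∂volume, t ∈ Ioo (0 : ℝ) T → g t + A * y t ^ α ≤ h t)
    (hh_nonneg : ∀ t ∈ Ico (0 : ℝ) T, 0 ≤ h t)
    (hh_int : ∀ t ∈ Ico (0 : ℝ) T, IntervalIntegrable h volume 0 t)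
    (hh_bd : ∀ t ∈ Ioo (0 : ℝ) (T - τ), (∫ s in t..t + τ, h s) ≤ B) :
    ∀ t ∈ Ioo (0 : ℝ) T,
      y t ≤ max (y 0 + B) (1 / τ ^ (1 / α) * (B / A) ^ (1 / α) + 2 * B) := by
  obtain ⟨hτ0, hτT⟩ := hτ
  intro t ht
  obtain ⟨ht0, htT⟩ := ht
  set M := 1 / τ ^ (1 / α) * (B / A) ^ (1 / α) with hM
  have hτα : (0:ℝ) < τ ^ (1/α) := Real.rpow_pos_of_pos hτ0 _
  have hBA : (0:ℝ) < B / A := div_pos hB hA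
  have hM0 : 0 < M := mul_pos (div_pos one_pos hτα) (Real.rpow_pos_of_pos hBA _)
  have hMrepr : M = ((B / A) / τ) ^ (1 / α) := by
    rw [hM, Real.div_rpow hBA.le hτ0.le]; ring
  have hMα : A * M ^ α = B / τ := by
    rw [hMrepr, ← Real.rpow_mul (div_nonneg hBA.le hτ0.le), one_div,
      inv_mul_cancel₀ hα.ne', Real.rpow_one]
    field_simp
  -- integrability helpers
  have hgInt : ∀ a b : ℝ, 0 ≤ a → a ≤ b → b < T → IntervalIntegrable g volume a b := by
    intro a b ha hab hb
    refine (hg_int b ⟨ha.trans hab, hb⟩).mono_set ?_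
    rw [uIcc_of_le hab, uIcc_of_le (ha.trans hab)]
    exact Icc_subset_Icc ha le_rfl
  have hhInt : ∀ a b : ℝ, 0 ≤ a → a ≤ b → b < T → IntervalIntegrable h volume a b := by
    intro a b ha hab hb
    refine (hh_int b ⟨ha.trans hab, hb⟩).mono_set ?_
    rw [uIcc_of_le hab, uIcc_of_le (ha.trans hab)]
    exact Icc_subset_Icc ha le_rfl
  -- continuity of y on Icc 0 t
  have hycont : ContinuousOn y (Icc 0 t) := by
    have hio : IntegrableOn g (uIcc 0 t) volume := by
      rw [uIcc_of_le ht0.le]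
      exact (integrableOn_Icc_iff_integrableOn_Ioc).2
        ((intervalIntegrable_iff_integrableOn_Ioc_of_le ht0.le).1
          (hg_int t ⟨ht0.le, htT⟩))
    have hF := intervalIntegral.continuousOn_primitive_interval (a := (0:ℝ)) (b := t) hio
    rw [uIcc_of_le ht0.le] at hF
    exact (continuousOn_const.add hF).congr
      (fun u hu => hy_AC u ⟨hu.1, lt_of_le_of_lt hu.2 htT⟩)
  have hhbd := aux_hbound T τ B h hτ0 hτT hB hh_nonneg hh_int hh_bd
  -- key estimate
  have key : ∀ a b : ℝ, 0 ≤ a → a ≤ b → b ≤ t → (∀ u ∈ Icc a b, M ≤ y u) →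
      y b ≤ y a + B := by
    intro a b ha hab hbt hMy
    have hbT : b < T := lt_of_le_of_lt hbt htT
    have haT : a < T := lt_of_le_of_lt hab hbT
    have hyab : y b - y a = ∫ s in a..b, g s := by
      rw [hy_AC b ⟨ha.trans hab, hbT⟩, hy_AC a ⟨ha, haT⟩]
      have hsplit := intervalIntegral.integral_add_adjacent_intervals
        (hgInt 0 a le_rfl ha haT) (hgInt a b ha hab hbT)
      linarith [hsplit]
    -- interval integrability of A * y ^ α
    have hyc : ContinuousOn (fun u => A * y u ^ α) (Icc a b) :=
      continuousOn_const.mul ((hycont.mono (Icc_subset_Icc ha hbt)).rpow_const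
        (fun x _ => Or.inr hα.le))
    have hyint : IntervalIntegrable (fun u => A * y u ^ α) volume a b := by
      apply ContinuousOn.intervalIntegrable
      rwa [uIcc_of_le hab]
    -- a.e. comparison
    have hmono : (∫ s in a..b, g s) ≤ ∫ s in a..b, (h s - A * y s ^ α) := by
      apply intervalIntegral.integral_mono_ae_restrict hab (hgInt a b ha hab hbT)
        ((hhInt a b ha hab hbT).sub hyint)
      have h1 : ∀ᵐ u ∂(volume.restrict (Icc a b)), u ∈ Ioo 0 T → g u + A * y u ^ α ≤ h u :=
        ae_restrict_of_ae hineq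
      have h2 : ∀ᵐ u ∂(volume.restrict (Icc a b)), u ∈ Icc a b :=
        ae_restrict_mem measurableSet_Icc
      have h3 : ∀ᵐ u ∂(volume.restrict (Icc a b)), u ≠ 0 := by
        apply ae_restrict_of_ae
        have h0 : (volume : Measure ℝ) {0} = 0 := Real.volume_singleton
        rw [MeasureTheory.ae_iff]
        convert h0 using 2
        ext u; simp
      filter_upwards [h1, h2, h3] with u hu1 hu2 hu3
      have hu0 : 0 < u := lt_of_le_of_ne (ha.trans hu2.1) (Ne.symm hu3)
      have := hu1 ⟨hu0, lt_of_le_of_lt (hu2.2.trans hbt) htT⟩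
      show g u ≤ h u - A * y u ^ α
      linarith
    -- lower bound for the dissipative term
    have hconst : (B / τ) * (b - a) ≤ ∫ s in a..b, A * y s ^ α := by
      have hm := intervalIntegral.integral_mono_on hab
        (intervalIntegrable_const (c := B / τ)) hyint
        (fun x hx => by
          have h1 : M ^ α ≤ y x ^ α :=
            Real.rpow_le_rpow hM0.le (hMy x hx) hα.le
          have h2 : A * M ^ α ≤ A * y x ^ α := by nlinarith
          linarith [hMα])
      rw [intervalIntegral.integral_const, smul_eq_mul] at hm
      calc B / τ * (b - a) = (b - a) * (B / τ) := by ring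
        _ ≤ _ := hm
    have hsub : (∫ s in a..b, (h s - A * y s ^ α))
        = (∫ s in a..b, h s) - ∫ s in a..b, A * y s ^ α :=
      intervalIntegral.integral_sub (hhInt a b ha hab hbT) hyint
    have hhb := hhbd a b ha hab hbT
    have harith : (b - a) / τ * B = B / τ * (b - a) := by ring
    linarith
  -- main case analysis
  rcases le_or_gt (y t) M with hyt | hyt
  · refine le_trans hyt (le_trans ?_ (le_max_right _ _))
    linarith
  by_cases hS : ∃ u ∈ Icc 0 t, y u ≤ M
  · obtain ⟨u₀, hu₀, hyu₀⟩ := hS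
    set S := {u : ℝ | u ∈ Icc 0 t ∧ y u ≤ M} with hSdef
    have hSne : S.Nonempty := ⟨u₀, hu₀, hyu₀⟩
    have hSbdd : BddAbove S := ⟨t, fun u hu => hu.1.2⟩
    have hSclosed : IsClosed S := by
      have hSeq : S = Icc 0 t ∩ y ⁻¹' (Iic M) := rfl
      rw [hSeq]
      exact hycont.preimage_isClosed_of_isClosed isClosed_Icc isClosed_Iic
    set s := sSup S with hs
    have hsS : s ∈ S := hSclosed.csSup_mem hSne hSbdd
    have hst : s ≤ t := hsS.1.2
    have hs0 : 0 ≤ s := hsS.1.1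
    have hslt : s < t :=
      lt_of_le_of_ne hst (fun he => absurd (he ▸ hsS.2) (not_le.mpr hyt))
    have hgt : ∀ u ∈ Ioc s t, M < y u := by
      intro u hu
      by_contra hle
      push_neg at hle
      exact absurd (le_csSup hSbdd (⟨⟨hs0.trans hu.1.le, hu.2⟩, hle⟩ : u ∈ S))
        (not_le.mpr hu.1)
    have hMs : M ≤ y s := by
      have hne : (nhdsWithin s (Ioc s t)).NeBot := by
        apply mem_closure_iff_nhdsWithin_neBot.mp
        rw [closure_Ioc hslt.ne]
        exact ⟨le_rfl, hst⟩
      have htends : Filter.Tendsto y (nhdsWithin s (Ioc s t)) (nhds (y s)) :=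
        ((hycont s hsS.1).tendsto).mono_left
          (nhdsWithin_mono _ (fun u hu => ⟨hs0.trans hu.1.le, hu.2⟩))
      refine ge_of_tendsto htends ?_
      filter_upwards [self_mem_nhdsWithin] with u hu
      exact (hgt u hu).le
    have hkey := key s t hs0 hst le_rfl (fun u hu => by
      rcases eq_or_lt_of_le hu.1 with he | hl
      · exact he ▸ hMs
      · exact (hgt u ⟨hl, hu.2⟩).le)
    refine le_trans ?_ (le_max_right _ _)
    have := hsS.2
    linarith
  · push_neg at hS
    have hkey := key 0 t le_rfl ht0.le le_rfl (fun u hu => (hS u hu).le)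
    exact le_trans hkey (le_max_left _ _)
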